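/- The function E(t) = Σ_{ℓ∈ℤ} exp(−2π²(ℓ+t)²) is 1-periodic, attains its maximum over ℝ at t = 0, and is decreasing on [0, 1/2]. -/

import Mathlib

open Real

/- ### Auxiliary lemmas -/

private lemma pg_c_lb : (18:ℝ) ≤ 2 * Real.pi ^ 2 := by
  nlinarith [Real.pi_gt_three]

private lemma pg_c_ub : 2 * Real.pi ^ 2 ≤ 20 := by
  nlinarith [Real.pi_lt_d2, Real.pi_gt_three]

/-- Key monotonicity inequality for `x ↦ x * exp (-2π² x²)`. -/
private lemma pg_mul_exp_anti {a b : ℝ} (ha : 0 ≤ a) (hab : a ≤ b)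
    (h : 1 ≤ 2 * Real.pi ^ 2 * (a * (a + b))) :
    b * Real.exp (-2 * Real.pi ^ 2 * b ^ 2) ≤ a * Real.exp (-2 * Real.pi ^ 2 * a ^ 2) := by
  have h1 : b ≤ a * Real.exp (2 * Real.pi ^ 2 * (b ^ 2 - a ^ 2)) := by
    have e1 : 2 * Real.pi ^ 2 * (b ^ 2 - a ^ 2) + 1
        ≤ Real.exp (2 * Real.pi ^ 2 * (b ^ 2 - a ^ 2)) := Real.add_one_le_exp _
    have e2 : b ≤ a * (2 * Real.pi ^ 2 * (b ^ 2 - a ^ 2) + 1) := by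
      nlinarith [mul_nonneg (sub_nonneg.2 hab) (sub_nonneg.2 h)]
    calc b ≤ a * (2 * Real.pi ^ 2 * (b ^ 2 - a ^ 2) + 1) := e2
      _ ≤ a * Real.exp (2 * Real.pi ^ 2 * (b ^ 2 - a ^ 2)) :=
        mul_le_mul_of_nonneg_left e1 ha
  calc b * Real.exp (-2 * Real.pi ^ 2 * b ^ 2)
      ≤ (a * Real.exp (2 * Real.pi ^ 2 * (b ^ 2 - a ^ 2))) * Real.exp (-2 * Real.pi ^ 2 * b ^ 2) :=
        mul_le_mul_of_nonneg_right h1 (Real.exp_pos _).le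
    _ = a * Real.exp (-2 * Real.pi ^ 2 * a ^ 2) := by
        rw [mul_assoc, ← Real.exp_add]; ring_nf

/-- Master summable series over `ℤ`. -/
private lemma pg_summable_master :
    Summable (fun ℓ : ℤ => (|(ℓ:ℝ)| + 1) * Real.exp (-(Real.pi ^ 2) * (ℓ:ℝ) ^ 2)) := by
  have hr : Real.exp (-(Real.pi ^ 2)) < 1 := by
    rw [Real.exp_lt_one_iff]
    nlinarith [Real.pi_gt_three]
  have hr0 : (0:ℝ) ≤ Real.exp (-(Real.pi ^ 2)) := (Real.exp_pos _).le
  have hnat : Summable (fun n : ℕ => ((n:ℝ) + 1) * Real.exp (-(Real.pi ^ 2) * (n:ℝ) ^ 2)) := by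
    have hgeom : Summable (fun n : ℕ => ((n:ℝ) + 1) * Real.exp (-(Real.pi ^ 2)) ^ n) := by
      have h1 : Summable (fun n : ℕ => (n:ℝ) ^ 1 * Real.exp (-(Real.pi ^ 2)) ^ n) :=
        summable_pow_mul_geometric_of_norm_lt_one 1 (by rwa [Real.norm_eq_abs, abs_of_nonneg hr0])
      have h2 : Summable (fun n : ℕ => Real.exp (-(Real.pi ^ 2)) ^ n) :=
        summable_geometric_of_lt_one hr0 hr
      simpa [add_mul, pow_one] using h1.add h2
    refine Summable.of_nonneg_of_le (fun n => by positivity) (fun n => ?_) hgeom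
    have : Real.exp (-(Real.pi ^ 2) * (n:ℝ) ^ 2) ≤ Real.exp (-(Real.pi ^ 2)) ^ n := by
      rw [← Real.exp_nat_mul]
      apply Real.exp_le_exp.2
      have hn2 : (n:ℝ) ≤ (n:ℝ) ^ 2 := by
        have := Nat.le_self_pow (two_ne_zero) n
        exact_mod_cast this
      nlinarith [Real.pi_gt_three]
    have hn : (0:ℝ) ≤ (n:ℝ) + 1 := by positivity
    exact mul_le_mul_of_nonneg_left this hn
  apply Summable.of_nat_of_neg
  · simpa using hnat
  · simpa using hnat

/-- Comparison: terms are bounded by the master series for `|x| ≤ 1`. -/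
private lemma pg_exp_le {x : ℝ} (hx : |x| ≤ 1) (ℓ : ℤ) :
    Real.exp (-2 * Real.pi ^ 2 * ((ℓ:ℝ) + x) ^ 2)
      ≤ Real.exp (2 * Real.pi ^ 2) * Real.exp (-(Real.pi ^ 2) * (ℓ:ℝ) ^ 2) := by
  rw [← Real.exp_add]
  apply Real.exp_le_exp.2
  have h1 : x ^ 2 ≤ 1 := by nlinarith [abs_nonneg x, sq_abs x]
  nlinarith [sq_nonneg ((ℓ:ℝ) + 2 * x), Real.pi_gt_three, sq_nonneg ((ℓ:ℝ) + x)]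

private lemma pg_summable_E {x : ℝ} (hx : |x| ≤ 1) :
    Summable (fun ℓ : ℤ => Real.exp (-2 * Real.pi ^ 2 * ((ℓ:ℝ) + x) ^ 2)) := by
  refine Summable.of_nonneg_of_le (fun ℓ => (Real.exp_pos _).le) (fun ℓ => ?_)
    ((pg_summable_master.mul_left (Real.exp (2 * Real.pi ^ 2))))
  calc Real.exp (-2 * Real.pi ^ 2 * ((ℓ:ℝ) + x) ^ 2)
      ≤ Real.exp (2 * Real.pi ^ 2) * Real.exp (-(Real.pi ^ 2) * (ℓ:ℝ) ^ 2) := pg_exp_le hx ℓ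
    _ ≤ Real.exp (2 * Real.pi ^ 2) * ((|(ℓ:ℝ)| + 1) * Real.exp (-(Real.pi ^ 2) * (ℓ:ℝ) ^ 2)) := by
        have h1 : (1:ℝ) ≤ |(ℓ:ℝ)| + 1 := by linarith [abs_nonneg ((ℓ:ℝ))]
        nlinarith [Real.exp_pos (-(Real.pi ^ 2) * (ℓ:ℝ) ^ 2), Real.exp_pos (2 * Real.pi ^ 2),
          mul_le_mul_of_nonneg_left h1 (Real.exp_pos (-(Real.pi ^ 2) * (ℓ:ℝ) ^ 2)).le]

private lemma pg_summable_phi {x : ℝ} (hx : |x| ≤ 1) :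
    Summable (fun ℓ : ℤ => ((ℓ:ℝ) + x) * Real.exp (-2 * Real.pi ^ 2 * ((ℓ:ℝ) + x) ^ 2)) := by
  refine Summable.of_norm ?_
  refine Summable.of_nonneg_of_le (fun ℓ => norm_nonneg _) (fun ℓ => ?_)
    ((pg_summable_master.mul_left (Real.exp (2 * Real.pi ^ 2))))
  rw [Real.norm_eq_abs, abs_mul, Real.abs_exp]
  have h1 : |(ℓ:ℝ) + x| ≤ |(ℓ:ℝ)| + 1 := (abs_add_le _ _).trans (by linarith [hx])
  have h2 := pg_exp_le hx ℓ
  have h3 : (0:ℝ) ≤ |(ℓ:ℝ)| + 1 := by positivity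
  calc |(ℓ:ℝ) + x| * Real.exp (-2 * Real.pi ^ 2 * ((ℓ:ℝ) + x) ^ 2)
      ≤ (|(ℓ:ℝ)| + 1) * (Real.exp (2 * Real.pi ^ 2) * Real.exp (-(Real.pi ^ 2) * (ℓ:ℝ) ^ 2)) := by
        apply mul_le_mul h1 h2 (Real.exp_pos _).le h3
    _ = Real.exp (2 * Real.pi ^ 2) * ((|(ℓ:ℝ)| + 1) * Real.exp (-(Real.pi ^ 2) * (ℓ:ℝ) ^ 2)) := by
        ring

private lemma pg_key (n : ℕ) {u : ℝ} (hu : (n:ℝ) + 3/4 ≤ u) :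
    4*(2*Real.pi^2)*((n:ℝ)+1)*((n:ℝ)+2) * 2^(n+1)
      ≤ Real.exp (2*Real.pi^2*u^2 - (Real.pi^2)/8) := by
  have hc1 := pg_c_lb
  have hc2 := pg_c_ub
  have hπ := Real.pi_gt_d2
  have hn0 : (0:ℝ) ≤ (n:ℝ) := Nat.cast_nonneg n
  -- bound the combinatorial factor by 1280 * 8^n
  have hp1 : ((n:ℝ)+1) ≤ 2^(n+1) := by
    have := Nat.lt_two_pow_self (n := n+1)
    have := this.le
    exact_mod_cast Nat.cast_le.2 this
  have hp2 : ((n:ℝ)+2) ≤ 2^(n+2) := by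
    have := (Nat.lt_two_pow_self (n := n+2)).le
    exact_mod_cast Nat.cast_le.2 this
  have hLHS : 4*(2*Real.pi^2)*((n:ℝ)+1)*((n:ℝ)+2) * 2^(n+1) ≤ 1280 * 8^n := by
    have h8 : (2:ℝ)^(n+1) * 2^(n+2) * 2^(n+1) = 16 * 8^n := by
      rw [← pow_add, ← pow_add]
      have : n + 1 + (n + 2) + (n + 1) = 3*n + 4 := by ring
      rw [this, pow_add, pow_mul]
      norm_num
      ring
    have hpos1 : (0:ℝ) < 2^(n+1) := by positivity
    have h2 : (0:ℝ) ≤ (n:ℝ)+2 := by linarith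
    have hmm : ((n:ℝ)+1)*((n:ℝ)+2) ≤ 2^(n+1)*2^(n+2) :=
      mul_le_mul hp1 hp2 h2 (by positivity)
    calc 4*(2*Real.pi^2)*((n:ℝ)+1)*((n:ℝ)+2) * 2^(n+1)
        = (2*Real.pi^2) * (((n:ℝ)+1)*((n:ℝ)+2)) * (4 * 2^(n+1)) := by ring
      _ ≤ (2*Real.pi^2) * (2^(n+1)*2^(n+2)) * (4 * 2^(n+1)) := by
          have h3 : (0:ℝ) ≤ 2*Real.pi^2 := by positivity
          have h4 : (0:ℝ) ≤ 4 * (2:ℝ)^(n+1) := by positivity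
          exact mul_le_mul_of_nonneg_right (mul_le_mul_of_nonneg_left hmm h3) h4
      _ ≤ 20 * (2^(n+1)*2^(n+2)) * (4 * 2^(n+1)) := by
          have h5 : (0:ℝ) ≤ (2:ℝ)^(n+1)*2^(n+2) * (4 * 2^(n+1)) := by positivity
          nlinarith [h5]
      _ = 80 * (2^(n+1) * 2^(n+2) * 2^(n+1)) := by ring
      _ = 80 * (16 * 8^n) := by rw [h8]
      _ = 1280 * 8^n := by ring
  have h1280 : (1280:ℝ) ≤ Real.exp 9 := by
    have h1 : Real.exp 9 = Real.exp 1 ^ 9 := by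
      rw [← Real.exp_nat_mul]; norm_num
    have h2 : (2.7:ℝ) ≤ Real.exp 1 := by
      have := Real.exp_one_gt_d9; nlinarith
    have h3 : (2.7:ℝ)^9 ≤ Real.exp 1 ^ 9 := by
      apply pow_le_pow_left₀ (by norm_num) h2
    nlinarith [h3]
  have h8e : (8:ℝ) ≤ Real.exp 27 := by
    have := Real.add_one_le_exp (27:ℝ); linarith
  have h8en : (8:ℝ)^n ≤ Real.exp 27 ^ n := pow_le_pow_left₀ (by norm_num) h8e n
  have hRHS : (1280:ℝ) * 8^n ≤ Real.exp (9 + 27*(n:ℝ)) := by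
    have : Real.exp (9 + 27*(n:ℝ)) = Real.exp 9 * Real.exp 27 ^ n := by
      rw [Real.exp_add]
      congr 1
      rw [← Real.exp_nat_mul]
      ring_nf
    rw [this]
    have h8n : (0:ℝ) ≤ (8:ℝ)^n := by positivity
    nlinarith [pow_pos (show (0:ℝ) < 8 by norm_num) n, Real.exp_pos (9:ℝ),
      mul_le_mul h1280 h8en h8n (Real.exp_pos 9).le]
  have hexp : Real.exp (9 + 27*(n:ℝ)) ≤ Real.exp (2*Real.pi^2*u^2 - (Real.pi^2)/8) := by
    apply Real.exp_le_exp.2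
    have hu2 : ((n:ℝ) + 3/4)^2 ≤ u^2 := by nlinarith
    nlinarith [sq_nonneg (n:ℝ), hπ]
  linarith

private lemma pg_D_le {t : ℝ} (ht0 : 0 < t) (ht : t ≤ 1/4) (n : ℕ) :
    ((n:ℝ)+1-t) * Real.exp (-2*Real.pi^2*((n:ℝ)+1-t)^2)
      - ((n:ℝ)+1+t) * Real.exp (-2*Real.pi^2*((n:ℝ)+1+t)^2)
    ≤ Real.exp (-(Real.pi^2)/8) * t * (1/2)^(n+1) := by
  have hc1 := pg_c_lb
  set u : ℝ := (n:ℝ)+1-t with hu_def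
  set v : ℝ := (n:ℝ)+1+t with hv_def
  have hn0 : (0:ℝ) ≤ (n:ℝ) := Nat.cast_nonneg n
  have h34 : (n:ℝ) + 3/4 ≤ u := by rw [hu_def]; linarith
  have huv : u ≤ v := by rw [hu_def, hv_def]; linarith
  have hv2 : v ≤ (n:ℝ)+2 := by rw [hv_def]; linarith
  have hv0 : (0:ℝ) ≤ v := by rw [hv_def]; linarith
  have E1pos : (0:ℝ) < Real.exp (-2*Real.pi^2*u^2) := Real.exp_pos _
  have E2pos : (0:ℝ) < Real.exp (-2*Real.pi^2*v^2) := Real.exp_pos _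
  -- step A
  have stepA : u * Real.exp (-2*Real.pi^2*u^2) - v * Real.exp (-2*Real.pi^2*v^2)
      ≤ v * (Real.exp (-2*Real.pi^2*u^2) - Real.exp (-2*Real.pi^2*v^2)) := by
    nlinarith [mul_le_mul_of_nonneg_right huv E1pos.le]
  -- step B/C
  have stepBC : Real.exp (-2*Real.pi^2*u^2) - Real.exp (-2*Real.pi^2*v^2)
      ≤ Real.exp (-2*Real.pi^2*u^2) * (2*Real.pi^2*(v^2-u^2)) := by
    have hB : Real.exp (-2*Real.pi^2*v^2)
        = Real.exp (-2*Real.pi^2*u^2) * Real.exp (-(2*Real.pi^2*(v^2-u^2))) := by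
      rw [← Real.exp_add]; congr 1; ring
    have hC : 1 - Real.exp (-(2*Real.pi^2*(v^2-u^2))) ≤ 2*Real.pi^2*(v^2-u^2) := by
      have := Real.add_one_le_exp (-(2*Real.pi^2*(v^2-u^2)))
      linarith
    calc Real.exp (-2*Real.pi^2*u^2) - Real.exp (-2*Real.pi^2*v^2)
        = Real.exp (-2*Real.pi^2*u^2) * (1 - Real.exp (-(2*Real.pi^2*(v^2-u^2)))) := by
          rw [hB]; ring
      _ ≤ Real.exp (-2*Real.pi^2*u^2) * (2*Real.pi^2*(v^2-u^2)) :=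
          mul_le_mul_of_nonneg_left hC E1pos.le
  have hdiff : v^2 - u^2 = 4*t*((n:ℝ)+1) := by rw [hu_def, hv_def]; ring
  -- step D: from pg_key
  have hkey := pg_key n h34
  have stepD : 4*(2*Real.pi^2)*((n:ℝ)+1)*((n:ℝ)+2) * Real.exp (-2*Real.pi^2*u^2)
      ≤ Real.exp (-(Real.pi^2)/8) * (1/2)^(n+1) := by
    have h1 := mul_le_mul_of_nonneg_right hkey E1pos.le
    have h2 : Real.exp (2*Real.pi^2*u^2 - (Real.pi^2)/8) * Real.exp (-2*Real.pi^2*u^2)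
        = Real.exp (-(Real.pi^2)/8) := by
      rw [← Real.exp_add]; congr 1; ring
    rw [h2] at h1
    have hp : ((1:ℝ)/2)^(n+1) * 2^(n+1) = 1 := by
      rw [← mul_pow]; norm_num
    have hhalf : (0:ℝ) ≤ ((1:ℝ)/2)^(n+1) := by positivity
    have h3 := mul_le_mul_of_nonneg_right h1 hhalf
    calc 4*(2*Real.pi^2)*((n:ℝ)+1)*((n:ℝ)+2) * Real.exp (-2*Real.pi^2*u^2)
        = 4*(2*Real.pi^2)*((n:ℝ)+1)*((n:ℝ)+2) * 2^(n+1) * Real.exp (-2*Real.pi^2*u^2)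
            * (1/2)^(n+1) := by
          rw [show 4*(2*Real.pi^2)*((n:ℝ)+1)*((n:ℝ)+2) * 2^(n+1) * Real.exp (-2*Real.pi^2*u^2)
            * (1/2)^(n+1) = 4*(2*Real.pi^2)*((n:ℝ)+1)*((n:ℝ)+2) * Real.exp (-2*Real.pi^2*u^2)
            * ((1/2)^(n+1) * 2^(n+1)) by ring, hp, mul_one]
      _ ≤ Real.exp (-(Real.pi^2)/8) * (1/2)^(n+1) := h3
  -- combine
  have hfinal : v * (Real.exp (-2*Real.pi^2*u^2) - Real.exp (-2*Real.pi^2*v^2))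
      ≤ t * (Real.exp (-(Real.pi^2)/8) * (1/2)^(n+1)) := by
    calc v * (Real.exp (-2*Real.pi^2*u^2) - Real.exp (-2*Real.pi^2*v^2))
        ≤ v * (Real.exp (-2*Real.pi^2*u^2) * (2*Real.pi^2*(v^2-u^2))) :=
          mul_le_mul_of_nonneg_left stepBC hv0
      _ = t * (4*(2*Real.pi^2)*((n:ℝ)+1)*v * Real.exp (-2*Real.pi^2*u^2)) := by
          rw [hdiff]; ring
      _ ≤ t * (4*(2*Real.pi^2)*((n:ℝ)+1)*((n:ℝ)+2) * Real.exp (-2*Real.pi^2*u^2)) := by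
          apply mul_le_mul_of_nonneg_left _ ht0.le
          have h4 : (0:ℝ) ≤ 4*(2*Real.pi^2)*((n:ℝ)+1) := by positivity
          nlinarith [mul_le_mul_of_nonneg_right (mul_le_mul_of_nonneg_left hv2 h4) E1pos.le]
      _ ≤ t * (Real.exp (-(Real.pi^2)/8) * (1/2)^(n+1)) :=
          mul_le_mul_of_nonneg_left stepD ht0.le
  calc u * Real.exp (-2*Real.pi^2*u^2) - v * Real.exp (-2*Real.pi^2*v^2)
      ≤ v * (Real.exp (-2*Real.pi^2*u^2) - Real.exp (-2*Real.pi^2*v^2)) := stepA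
    _ ≤ t * (Real.exp (-(Real.pi^2)/8) * (1/2)^(n+1)) := hfinal
    _ = Real.exp (-(Real.pi^2)/8) * t * (1/2)^(n+1) := by ring

/-- Nonnegativity of minus the derivative series on `(0, 1/2)`. -/
private lemma pg_S_nonneg {t : ℝ} (ht0 : 0 < t) (ht : t < 1/2) :
    0 ≤ ∑' ℓ : ℤ, ((ℓ:ℝ) + t) * Real.exp (-2 * Real.pi ^ 2 * ((ℓ:ℝ) + t) ^ 2) := by
  set f : ℤ → ℝ := fun ℓ => ((ℓ:ℝ) + t) * Real.exp (-2 * Real.pi ^ 2 * ((ℓ:ℝ) + t) ^ 2) with hf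
  have habs : |t| ≤ 1 := by rw [abs_of_pos ht0]; linarith
  have hΦ : Summable f := pg_summable_phi habs
  rcases le_or_gt (1/4) t with hc | hc
  · -- case A : 1/4 ≤ t < 1/2
    rw [← tsum_nat_add_neg_add_one hΦ]
    apply tsum_nonneg
    intro n
    have key : (((n:ℝ)) + 1 - t) * Real.exp (-2 * Real.pi ^ 2 * (((n:ℝ)) + 1 - t) ^ 2)
        ≤ (((n:ℝ)) + t) * Real.exp (-2 * Real.pi ^ 2 * (((n:ℝ)) + t) ^ 2) := by
      apply pg_mul_exp_anti
      · have : (0:ℝ) ≤ (n:ℝ) := Nat.cast_nonneg n; linarith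
      · linarith
      · have hn : (0:ℝ) ≤ (n:ℝ) := Nat.cast_nonneg n
        have h4 : (1/4:ℝ) ≤ ((n:ℝ)+t) * (((n:ℝ)+t)+((n:ℝ)+1-t)) := by nlinarith
        have h5 := mul_le_mul pg_c_lb h4 (by norm_num)
          (le_trans (by norm_num : (0:ℝ) ≤ 18) pg_c_lb)
        linarith
    have c1 : (((n:ℤ)):ℝ) + t = (n:ℝ) + t := by push_cast; ring
    have c2 : ((-((n:ℤ)+1):ℤ):ℝ) + t = -((n:ℝ) + 1 - t) := by push_cast; ring
    simp only [hf]
    rw [c1, c2, neg_sq]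
    linarith [key]
  · -- case B : 0 < t < 1/4
    have h1 : Summable (fun n : ℕ => f ((n:ℤ))) :=
      hΦ.comp_injective (i := fun n : ℕ => (n:ℤ)) (fun a b h => by simpa using h)
    have h2 : Summable (fun n : ℕ => f (-((n:ℤ)+1))) :=
      hΦ.comp_injective (i := fun n : ℕ => -((n:ℤ)+1)) (fun a b h => by simpa using h)
    have h1'' : Summable (fun n : ℕ => f (((n+1:ℕ):ℤ))) := (summable_nat_add_iff 1).mpr h1
    rw [tsum_of_nat_of_neg_add_one h1 h2, Summable.tsum_eq_zero_add h1]
    have hcomb : (∑' n : ℕ, f (((n+1:ℕ):ℤ))) + ∑' n : ℕ, f (-((n:ℤ)+1))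
        = ∑' n : ℕ, (f (((n+1:ℕ):ℤ)) + f (-((n:ℤ)+1))) := (Summable.tsum_add h1'' h2).symm
    have hgeo : Summable (fun n : ℕ => Real.exp (-(Real.pi^2)/8) * t * (1/2:ℝ)^(n+1)) := by
      apply Summable.congr ((summable_geometric_of_lt_one (by norm_num) (by norm_num :
        (1/2:ℝ) < 1)).mul_left (Real.exp (-(Real.pi^2)/8) * t * (1/2)))
      intro n
      rw [pow_succ]
      ring
    have hgeosum : ∑' n : ℕ, Real.exp (-(Real.pi^2)/8) * t * (1/2:ℝ)^(n+1)
        = Real.exp (-(Real.pi^2)/8) * t := by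
      have hhalf : ∑' n : ℕ, (1/2:ℝ)^n = 2 := by
        rw [tsum_geometric_of_lt_one (by norm_num) (by norm_num)]
        norm_num
      calc ∑' n : ℕ, Real.exp (-(Real.pi^2)/8) * t * (1/2:ℝ)^(n+1)
          = ∑' n : ℕ, (Real.exp (-(Real.pi^2)/8) * t * (1/2)) * (1/2:ℝ)^n := by
            apply tsum_congr; intro n; rw [pow_succ]; ring
        _ = (Real.exp (-(Real.pi^2)/8) * t * (1/2)) * ∑' n : ℕ, (1/2:ℝ)^n := tsum_mul_left
        _ = Real.exp (-(Real.pi^2)/8) * t := by rw [hhalf]; ring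
    have hpair : ∀ n : ℕ,
        -(Real.exp (-(Real.pi^2)/8) * t * (1/2:ℝ)^(n+1)) ≤ f (((n+1:ℕ):ℤ)) + f (-((n:ℤ)+1)) := by
      intro n
      have hD := pg_D_le ht0 hc.le n
      have c1 : ((((n+1:ℕ):ℤ)):ℝ) + t = (n:ℝ) + 1 + t := by push_cast; ring
      have c2 : ((-((n:ℤ)+1):ℤ):ℝ) + t = -((n:ℝ) + 1 - t) := by push_cast; ring
      simp only [hf]
      rw [c1, c2, neg_sq]
      linarith [hD]
    have hlow : -(Real.exp (-(Real.pi^2)/8) * t)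
        ≤ ∑' n : ℕ, (f (((n+1:ℕ):ℤ)) + f (-((n:ℤ)+1))) := by
      have := Summable.tsum_le_tsum hpair hgeo.neg (h1''.add h2)
      rwa [tsum_neg, hgeosum] at this
    have hzero : Real.exp (-(Real.pi^2)/8) * t ≤ f (((0:ℕ):ℤ)) := by
      simp only [hf]
      push_cast
      rw [zero_add, mul_comm]
      apply mul_le_mul_of_nonneg_left _ ht0.le
      apply Real.exp_le_exp.2
      have ht16 : t^2 ≤ 1/16 := by nlinarith
      nlinarith [mul_nonneg (sq_nonneg Real.pi) (by linarith : (0:ℝ) ≤ 1/16 - t^2)]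
    rw [add_assoc, hcomb]
    calc (0:ℝ) = Real.exp (-(Real.pi^2)/8) * t + -(Real.exp (-(Real.pi^2)/8) * t) := by ring
      _ ≤ f (((0:ℕ):ℤ)) + ∑' n : ℕ, (f (((n+1:ℕ):ℤ)) + f (-((n:ℤ)+1))) := add_le_add hzero hlow

/-- Term-by-term derivative of the periodized Gaussian on `(-1, 1)`. -/
private lemma pg_hasDerivAt {x : ℝ} (hx : x ∈ Set.Ioo (-1:ℝ) 1) :
    HasDerivAt (fun t : ℝ => ∑' ℓ : ℤ, Real.exp (-2 * Real.pi ^ 2 * ((ℓ:ℝ) + t) ^ 2))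
      (∑' ℓ : ℤ, (-(4*Real.pi^2) * ((ℓ:ℝ) + x)) * Real.exp (-2 * Real.pi ^ 2 * ((ℓ:ℝ) + x) ^ 2))
      x := by
  have hopen : IsOpen (Set.Ioo (-1:ℝ) 1) := isOpen_Ioo
  have hconn : IsPreconnected (Set.Ioo (-1:ℝ) 1) := (convex_Ioo _ _).isPreconnected
  have hu : Summable (fun ℓ : ℤ =>
      (4*Real.pi^2) * Real.exp (2*Real.pi^2) * ((|(ℓ:ℝ)|+1) * Real.exp (-(Real.pi^2)*(ℓ:ℝ)^2))) :=
    pg_summable_master.mul_left _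
  refine hasDerivAt_tsum_of_isPreconnected hu hopen hconn
    (g' := fun (ℓ : ℤ) (y : ℝ) =>
      (-(4*Real.pi^2) * ((ℓ:ℝ) + y)) * Real.exp (-2 * Real.pi ^ 2 * ((ℓ:ℝ) + y) ^ 2))
    (fun ℓ y _ => ?_) (fun ℓ y hy => ?_)
    (show (0:ℝ) ∈ Set.Ioo (-1:ℝ) 1 by norm_num)
    (pg_summable_E (x := 0) (by norm_num)) hx
  · have h1 : HasDerivAt (fun s : ℝ => ((ℓ:ℝ) + s)) 1 y := by
      simpa using (hasDerivAt_id y).const_add ((ℓ:ℝ))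
    have h2 := h1.pow 2
    have h3 := h2.const_mul (-2*Real.pi^2)
    have h4 := h3.exp
    show HasDerivAt (fun t : ℝ => Real.exp (-2 * Real.pi ^ 2 * ((ℓ:ℝ) + t) ^ 2))
      ((-(4*Real.pi^2) * ((ℓ:ℝ) + y)) * Real.exp (-2 * Real.pi ^ 2 * ((ℓ:ℝ) + y) ^ 2)) y
    convert h4 using 1
    norm_num
    rw [show ((fun s : ℝ => (ℓ:ℝ) + s) ^ 2) y = ((ℓ:ℝ) + y) ^ 2 from rfl]
    ring
  · rw [Real.norm_eq_abs, abs_mul, Real.abs_exp]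
    have hy1 : |y| ≤ 1 := by
      rw [abs_le]; exact ⟨hy.1.le, hy.2.le⟩
    have hyℓ : |(ℓ:ℝ) + y| ≤ |(ℓ:ℝ)| + 1 := (abs_add_le _ _).trans (by linarith [hy1])
    have habs : |(-(4*Real.pi^2) * ((ℓ:ℝ) + y))| ≤ (4*Real.pi^2) * (|(ℓ:ℝ)|+1) := by
      rw [abs_mul, abs_neg, abs_of_pos (by positivity : (0:ℝ) < 4*Real.pi^2)]
      exact mul_le_mul_of_nonneg_left hyℓ (by positivity)
    have hexp := pg_exp_le hy1 ℓ
    calc |(-(4*Real.pi^2) * ((ℓ:ℝ) + y))| * Real.exp (-2 * Real.pi ^ 2 * ((ℓ:ℝ) + y) ^ 2)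
        ≤ ((4*Real.pi^2) * (|(ℓ:ℝ)|+1)) *
            (Real.exp (2*Real.pi^2) * Real.exp (-(Real.pi^2)*(ℓ:ℝ)^2)) := by
          apply mul_le_mul habs hexp (Real.exp_pos _).le (by positivity)
      _ = (4*Real.pi^2) * Real.exp (2*Real.pi^2) * ((|(ℓ:ℝ)|+1) * Real.exp (-(Real.pi^2)*(ℓ:ℝ)^2)) := by
          ring

theorem periodized_gaussian_properties :
    Function.Periodic
        (fun t : ℝ => ∑' ℓ : ℤ, Real.exp (-2 * Real.pi ^ 2 * ((ℓ : ℝ) + t) ^ 2)) 1 ∧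
      (∀ t : ℝ, (∑' ℓ : ℤ, Real.exp (-2 * Real.pi ^ 2 * ((ℓ : ℝ) + t) ^ 2))
          ≤ ∑' ℓ : ℤ, Real.exp (-2 * Real.pi ^ 2 * ((ℓ : ℝ) + (0:ℝ)) ^ 2)) ∧
      AntitoneOn (fun t : ℝ => ∑' ℓ : ℤ, Real.exp (-2 * Real.pi ^ 2 * ((ℓ : ℝ) + t) ^ 2))
        (Set.Icc 0 (1/2)) := by
  set E : ℝ → ℝ := fun t => ∑' ℓ : ℤ, Real.exp (-2 * Real.pi ^ 2 * ((ℓ : ℝ) + t) ^ 2) with hE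
  -- periodicity
  have hper : Function.Periodic E 1 := by
    intro t
    have hre := (Equiv.addRight (1:ℤ)).tsum_eq
      (fun ℓ : ℤ => Real.exp (-2 * Real.pi ^ 2 * ((ℓ:ℝ) + t) ^ 2))
    simp only [Equiv.coe_addRight] at hre
    show (∑' ℓ : ℤ, Real.exp (-2 * Real.pi ^ 2 * ((ℓ:ℝ) + (t+1)) ^ 2))
      = ∑' ℓ : ℤ, Real.exp (-2 * Real.pi ^ 2 * ((ℓ:ℝ) + t) ^ 2)
    rw [← hre]
    apply tsum_congr
    intro ℓ
    congr 1
    push_cast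
    ring
  -- symmetry
  have hsymm : ∀ s : ℝ, E (-s) = E s := by
    intro s
    have hre := (Equiv.neg ℤ).tsum_eq
      (fun ℓ : ℤ => Real.exp (-2 * Real.pi ^ 2 * ((ℓ:ℝ) + s) ^ 2))
    simp only [Equiv.neg_apply] at hre
    show (∑' ℓ : ℤ, Real.exp (-2 * Real.pi ^ 2 * ((ℓ:ℝ) + (-s)) ^ 2))
      = ∑' ℓ : ℤ, Real.exp (-2 * Real.pi ^ 2 * ((ℓ:ℝ) + s) ^ 2)
    rw [← hre]
    apply tsum_congr
    intro ℓ
    congr 1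
    push_cast
    ring
  -- differentiability and continuity
  have hderiv : ∀ x ∈ Set.Ioo (-1:ℝ) 1, DifferentiableAt ℝ E x := fun x hx =>
    (pg_hasDerivAt hx).differentiableAt
  have hcont : ContinuousOn E (Set.Icc 0 (1/2)) := by
    intro x hx
    have hx' : x ∈ Set.Ioo (-1:ℝ) 1 := ⟨by linarith [hx.1], by linarith [hx.2]⟩
    exact ((hderiv x hx').continuousAt).continuousWithinAt
  -- antitone
  have hanti : AntitoneOn E (Set.Icc 0 (1/2)) := by
    apply antitoneOn_of_deriv_nonpos (convex_Icc _ _) hcont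
    · intro x hx
      rw [interior_Icc] at hx
      have hx' : x ∈ Set.Ioo (-1:ℝ) 1 := ⟨by linarith [hx.1], by linarith [hx.2]⟩
      exact (hderiv x hx').differentiableWithinAt
    · intro x hx
      rw [interior_Icc] at hx
      have hx' : x ∈ Set.Ioo (-1:ℝ) 1 := ⟨by linarith [hx.1], by linarith [hx.2]⟩
      rw [(pg_hasDerivAt hx').deriv]
      have hS := pg_S_nonneg hx.1 hx.2
      have hrw : (∑' ℓ : ℤ, (-(4*Real.pi^2) * ((ℓ:ℝ) + x)) *
            Real.exp (-2 * Real.pi ^ 2 * ((ℓ:ℝ) + x) ^ 2))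
          = (-(4*Real.pi^2)) * ∑' ℓ : ℤ, ((ℓ:ℝ) + x) *
            Real.exp (-2 * Real.pi ^ 2 * ((ℓ:ℝ) + x) ^ 2) := by
        rw [← tsum_mul_left]
        apply tsum_congr
        intro ℓ
        ring
      rw [hrw]
      have : (0:ℝ) < 4*Real.pi^2 := by positivity
      nlinarith
  -- maximum at 0
  have hmax : ∀ t : ℝ, E t ≤ E 0 := by
    intro t
    have hfr0 : 0 ≤ Int.fract t := Int.fract_nonneg t
    have hfr1 : Int.fract t < 1 := Int.fract_lt_one t
    have hEt : E t = E (Int.fract t) := by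
      have := hper.sub_int_mul_eq (x := t) ⌊t⌋
      rw [mul_one] at this
      rw [← this, Int.self_sub_floor]
    rcases le_or_gt (Int.fract t) (1/2) with h | h
    · rw [hEt]
      exact hanti (Set.mem_Icc.2 ⟨le_refl 0, by norm_num⟩)
        (Set.mem_Icc.2 ⟨hfr0, h⟩) hfr0
    · have h1 : E (Int.fract t) = E (1 - Int.fract t) := by
        have hs : E (1 - Int.fract t) = E (Int.fract t - 1) := by
          rw [← hsymm (Int.fract t - 1)]
          congr 1
          ring
        rw [hs, hper.sub_eq]
      rw [hEt, h1]
      have h2 : (0:ℝ) ≤ 1 - Int.fract t := by linarith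
      exact hanti (Set.mem_Icc.2 ⟨le_refl 0, by norm_num⟩)
        (Set.mem_Icc.2 ⟨h2, by linarith⟩) h2
  exact ⟨hper, fun t => hmax t, hanti⟩
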